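/- Let R be a commutative noetherian ring, d ≥ 0 an integer, and M a finitely generated R-module with Ext^i_R(M, R) = 0 for all i ≠ d. Let 0 → P_d → ⋯ → P_1 → P_0 → M → 0 be a resolution of M by finitely generated projective R-modules, with differentials ∂_i : P_i → P_{i−1}. Then the dual sequence 0 → P_0^* → P_1^* → ⋯ → P_{d−1}^* → P_d^* → Ext^d_R(M, R) → 0 is exact, where P^* = Hom_R(P, R), the maps P_{i−1}^* → P_i^* are the duals ∂_i^*, and the last map is the canonical surjection identifying coker(∂_d^*) with Ext^d_R(M, R). In particular, Ext^d_R(M, R) admits a projective resolution of length at most d by finitely generated projective R-modules. -/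

import Mathlib

open CategoryTheory CategoryTheory.Limits

universe u

/-- `M` admits a resolution `0 → P_d → ⋯ → P_1 → P_0 → M → 0` by finitely generated
projective `R`-modules (some `P_i` possibly zero). -/
def HasFinProjResLength (R : Type u) [CommRing R] (d : ℕ) (M : ModuleCat.{u} R) : Prop :=
  ∃ (P : ChainComplex (ModuleCat.{u} R) ℕ) (ε : P.X 0 ⟶ M),
    (∀ i : ℕ, Projective (P.X i)) ∧ (∀ i : ℕ, Module.Finite R (P.X i)) ∧
    (∀ i : ℕ, d < i → IsZero (P.X i)) ∧
    Epi ε ∧ (∃ h0 : P.d 1 0 ≫ ε = 0, (ShortComplex.mk (P.d 1 0) ε h0).Exact) ∧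
    (∀ n : ℕ, P.ExactAt (n + 1))

/-- The Ext modules `Ext^n_R(M, N)` for `R`-modules `M`, `N`. -/
noncomputable def extModule (R : Type u) [CommRing R] (n : ℕ)
    (M N : ModuleCat.{u} R) : ModuleCat.{u} R :=
  ((Ext R (ModuleCat.{u} R) n).obj (Opposite.op M)).obj N

/-- reversed index function: `ridx d 0 = d` (definitionally), `ridx d i = d - i` for `i ≤ d`,
and `ridx d i > d` for `i > d`. -/
private def ridx (d : ℕ) : ℕ → ℕ
  | 0 => d
  | (i+1) => (d - (i+1)) + ((i+1) - d) * (d + 1)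

private lemma ridx_le {d i : ℕ} (h : i ≤ d) : ridx d i = d - i := by
  cases i with
  | zero => simp [ridx]
  | succ n => simp [ridx, Nat.sub_eq_zero_of_le h]

private lemma ridx_gt {d i : ℕ} (h : d < i) : d < ridx d i := by
  cases i with
  | zero => omega
  | succ n =>
    have h1 : 0 < (n + 1) - d := by omega
    have h2 := Nat.le_mul_of_pos_left (d + 1) h1
    simp only [ridx]
    omega

private lemma fexact_congr {R : Type u} [CommRing R] (P : ChainComplex (ModuleCat.{u} R) ℕ)
    {i j k i' j' k' : ℕ} (hi : i = i') (hj : j = j') (hk : k = k')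
    (h : Function.Exact ((P.d i' j').hom.dualMap) ((P.d k' i').hom.dualMap)) :
    Function.Exact ((P.d i j).hom.dualMap) ((P.d k i).hom.dualMap) := by
  subst hi hj hk; exact h

private lemma inj_congr {R : Type u} [CommRing R] (P : ChainComplex (ModuleCat.{u} R) ℕ)
    {i j i' j' : ℕ} (hi : i = i') (hj : j = j')
    (h : Function.Injective ((P.d i' j').hom.dualMap)) :
    Function.Injective ((P.d i j).hom.dualMap) := by
  subst hi hj; exact h

private lemma exact_pi_congr {R : Type u} [CommRing R] (P : ChainComplex (ModuleCat.{u} R) ℕ)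
    {a j j' : ℕ} (hj : j = j') {N : Type u} [AddCommGroup N] [Module R N]
    (π : Module.Dual R (P.X a) →ₗ[R] N)
    (h : Function.Exact ((P.d a j').hom.dualMap) π) :
    Function.Exact ((P.d a j).hom.dualMap) π := by
  subst hj; exact h

private lemma subsingleton_of_isZero {R : Type u} [CommRing R] {A : ModuleCat.{u} R}
    (hA : IsZero A) : Subsingleton A := by
  rw [IsZero.iff_id_eq_zero] at hA
  refine ⟨fun a b => ?_⟩
  have ha : (𝟙 A) a = (0 : A ⟶ A) a := by rw [hA]
  have hb : (𝟙 A) b = (0 : A ⟶ A) b := by rw [hA]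
  exact ha.trans hb.symm

private lemma isZero_dual {R : Type u} [CommRing R] (A : ModuleCat.{u} R) (hA : IsZero A) :
    IsZero (ModuleCat.of R (Module.Dual R A)) := by
  haveI := subsingleton_of_isZero hA
  haveI : Subsingleton (Module.Dual R A) :=
    ⟨fun a b => LinearMap.ext fun x => by rw [Subsingleton.elim x 0, map_zero, map_zero]⟩
  exact ModuleCat.isZero_of_subsingleton _

/-- The dual complex, reversed so as to be a chain complex supported in degrees `≤ d`. -/
private noncomputable def dualComplex {R : Type u} [CommRing R]
    (P : ChainComplex (ModuleCat.{u} R) ℕ) (d : ℕ) : ChainComplex (ModuleCat.{u} R) ℕ :=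
  ChainComplex.of (fun i => ModuleCat.of R (Module.Dual R (P.X (ridx d i))))
    (fun n => ModuleCat.ofHom ((P.d (ridx d n) (ridx d (n+1))).hom.dualMap))
    (fun n => by
      have hz : P.d (ridx d n) (ridx d (n+1)) ≫ P.d (ridx d (n+1)) (ridx d (n+2)) = 0 :=
        P.d_comp_d _ _ _
      refine ModuleCat.hom_ext (LinearMap.ext fun φ => ?_)
      show (P.d (ridx d n) (ridx d (n+1)) ≫ P.d (ridx d (n+1)) (ridx d (n+2))).hom.dualMap φ = 0
      rw [hz]
      refine LinearMap.ext fun x => ?_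
      simp)

private lemma dualComplex_d {R : Type u} [CommRing R]
    (P : ChainComplex (ModuleCat.{u} R) ℕ) (d n : ℕ) :
    (dualComplex P d).d (n+1) n = ModuleCat.ofHom ((P.d (ridx d n) (ridx d (n+1))).hom.dualMap) :=
  ChainComplex.of_d (fun i => ModuleCat.of R (Module.Dual R (P.X (ridx d i))))
    (fun n => ModuleCat.ofHom ((P.d (ridx d n) (ridx d (n+1))).hom.dualMap)) n

/-- Let `R` be a commutative noetherian ring, `d ≥ 0`, and `M` a
finitely generated `R`-module with `Ext^i_R(M, R) = 0` for all `i ≠ d`.  Let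
`0 → P_d → ⋯ → P_1 → P_0 → M → 0` be a resolution of `M` by finitely generated
projective `R`-modules.  Then the dual sequence
`0 → P_0^* → P_1^* → ⋯ → P_d^* → Ext^d_R(M, R) → 0` is exact: the first dual map
`∂_1^* : P_0^* → P_1^*` is injective (when `d ≥ 1`), the sequence is exact at each
interior `P_j^*` (`1 ≤ j ≤ d - 1`), and there is a surjection
`π : P_d^* → Ext^d_R(M, R)` with kernel the image of `∂_d^*` (identifying
`coker (∂_d^*)` with `Ext^d_R(M, R)`).  In particular `Ext^d_R(M, R)` admits a
projective resolution of length at most `d` by finitely generated projective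
`R`-modules. -/
theorem stmt_12 (R : Type u) [CommRing R] [IsNoetherianRing R] (d : ℕ)
    (M : ModuleCat.{u} R) (hMfin : Module.Finite R M)
    (hMext : ∀ i : ℕ, i ≠ d → IsZero (extModule R i M (ModuleCat.of R R)))
    (P : ChainComplex (ModuleCat.{u} R) ℕ) (ε : P.X 0 ⟶ M)
    (hproj : ∀ i : ℕ, Projective (P.X i)) (hfin : ∀ i : ℕ, Module.Finite R (P.X i))
    (hbdd : ∀ i : ℕ, d < i → IsZero (P.X i))
    (hε_epi : Epi ε) (h0 : P.d 1 0 ≫ ε = 0)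
    (hexact0 : (ShortComplex.mk (P.d 1 0) ε h0).Exact)
    (hexact : ∀ n : ℕ, P.ExactAt (n + 1)) :
    (1 ≤ d → Function.Injective ((P.d 1 0).hom.dualMap)) ∧
    (∀ j : ℕ, 1 ≤ j → j < d →
      Function.Exact ((P.d j (j - 1)).hom.dualMap) ((P.d (j + 1) j).hom.dualMap)) ∧
    (∃ π : Module.Dual R (P.X d) →ₗ[R] extModule R d M (ModuleCat.of R R),
      Function.Surjective π ∧ Function.Exact ((P.d d (d - 1)).hom.dualMap) π) ∧
    HasFinProjResLength R d (extModule R d M (ModuleCat.of R R)) := by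
  classical
  haveI : ∀ n, Projective (P.X n) := hproj
  haveI : ∀ n, Module.Finite R (P.X n) := hfin
  haveI hmproj : ∀ n, Module.Projective R (P.X n) := fun n =>
    (IsProjective.iff_projective (P.X n)).2 (hproj n)
  -- the projective resolution structure
  let PR : ProjectiveResolution M :=
    { complex := P
      projective := hproj
      π := (ChainComplex.toSingle₀Equiv _ _).symm ⟨ε, h0⟩
      quasiIso := ⟨fun n => by
        cases n with
        | zero =>
          rw [ChainComplex.quasiIsoAt₀_iff, ShortComplex.quasiIso_iff_of_zeros']
          · refine (ShortComplex.exact_and_epi_g_iff_of_iso ?_).2 ⟨hexact0, hε_epi⟩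
            refine ShortComplex.isoMk (Iso.refl _) (Iso.refl _) (Iso.refl _)
              ((Category.id_comp _).trans (Category.comp_id _).symm) ?_
            dsimp
            simp [ChainComplex.toSingle₀Equiv_symm_apply_f_zero]
            exact (Category.id_comp _).trans (Category.comp_id _).symm
          · exact P.shape 0 0 (by simp)
          · rfl
          · rfl
        | succ n =>
          rw [quasiIsoAt_iff_exactAt']
          · exact hexact n
          · apply ChainComplex.exactAt_succ_single_obj⟩ }
  set Y := ModuleCat.of R R with hY
  let K0 := P.linearYonedaObj R Y
  let K : CochainComplex (ModuleCat.{u} R) ℕ :=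
    { X := fun i => ModuleCat.of R (Module.Dual R (P.X i))
      d := fun i j => ModuleCat.ofHom ((P.d j i).hom.dualMap)
      shape := fun i j h => by
        rw [P.shape j i h]
        exact ModuleCat.hom_ext (LinearMap.ext fun φ => LinearMap.ext fun x => by simp)
      d_comp_d' := fun i j k _ _ => by
        have hz : P.d k j ≫ P.d j i = 0 := P.d_comp_d _ _ _
        refine ModuleCat.hom_ext (LinearMap.ext fun φ => LinearMap.ext fun x => ?_)
        show φ ((P.d k j ≫ P.d j i) x) = 0
        rw [hz]
        simp }
  let isoK : K0 ≅ K := HomologicalComplex.Hom.isoOfComponents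
    (fun i => (ModuleCat.homLinearEquiv (S := R)).toModuleIso)
    (fun i j _ => ModuleCat.hom_ext (LinearMap.ext fun f => LinearMap.ext fun x => rfl))
  have eExt : ∀ n : ℕ, extModule R n M Y ≅ K.homology n := fun n =>
    PR.isoExt n Y ≪≫ HomologicalComplex.homologyMapIso isoK n
  have hKzero : ∀ n : ℕ, n ≠ d → K.ExactAt n := fun n hn => by
    rw [HomologicalComplex.exactAt_iff_isZero_homology]
    exact IsZero.of_iso (hMext n hn) (eExt n).symm
  have hprevnext : ∀ m : ℕ, (ComplexShape.up ℕ).prev m = m - 1 ∧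
      (ComplexShape.up ℕ).next m = m + 1 := by
    intro m
    refine ⟨?_, CochainComplex.next ℕ m⟩
    cases m with
    | zero => exact CochainComplex.prev_nat_zero
    | succ k => exact CochainComplex.prev_nat_succ k
  -- exactness of the dual sequence away from d, in elementwise form
  have hKE : ∀ m : ℕ, m ≠ d →
      Function.Exact ((P.d m (m - 1)).hom.dualMap) ((P.d (m + 1) m).hom.dualMap) := by
    intro m hm
    have h := (HomologicalComplex.exactAt_iff' K (m - 1) m (m + 1)
      (hprevnext m).1 (hprevnext m).2).1 (hKzero m hm)
    rw [ShortComplex.moduleCat_exact_iff_range_eq_ker] at h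
    rw [LinearMap.exact_iff]
    exact h.symm
  -- part 1 : injectivity
  have part1 : 1 ≤ d → Function.Injective ((P.d 1 0).hom.dualMap) := by
    intro hd
    have h := (HomologicalComplex.exactAt_iff' K 0 0 1
      (hprevnext 0).1 (hprevnext 0).2).1 (hKzero 0 (by omega))
    rw [ShortComplex.moduleCat_exact_iff] at h
    intro a b hab
    have hsub : (P.d 1 0).hom.dualMap (a - b) = 0 := by rw [map_sub, hab, sub_self]
    obtain ⟨y, hy⟩ := h (a - b) hsub
    have hz : (K.sc' 0 0 1).f = 0 := K.shape 0 0 (by simp)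
    rw [hz] at hy
    have hab0 : a - b = 0 := by rw [← hy]; rfl
    rw [sub_eq_zero] at hab0
    exact hab0
  -- part 2 : interior exactness
  have part2 : ∀ j : ℕ, 1 ≤ j → j < d →
      Function.Exact ((P.d j (j - 1)).hom.dualMap) ((P.d (j + 1) j).hom.dualMap) :=
    fun j _ h2 => hKE j (by omega)
  -- part 3 : the surjection π
  have hzero_top : IsZero (K.X (d + 1)) := isZero_dual (P.X (d + 1)) (hbdd (d + 1) (by omega))
  set f : Module.Dual R (P.X (d - 1)) →ₗ[R] Module.Dual R (P.X d) :=
    (P.d d (d - 1)).hom.dualMap with hf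
  let S := K.sc' (d - 1) d (d + 1)
  have hSg : S.g = 0 := hzero_top.eq_of_tgt _ _
  have w : S.f ≫ ModuleCat.ofHom (LinearMap.range f).mkQ = 0 := by
    refine ModuleCat.hom_ext (LinearMap.ext fun x => ?_)
    exact (Submodule.Quotient.mk_eq_zero _).2 ⟨x, rfl⟩
  let c : CokernelCofork S.f := CokernelCofork.ofπ (ModuleCat.ofHom (LinearMap.range f).mkQ) w
  have hc : IsColimit c := ModuleCat.cokernelIsColimit (ModuleCat.ofHom f)
  let hdata := ShortComplex.HomologyData.ofIsColimitCokernelCofork S hSg c hc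
  let e1 : K.homology d ≅ S.homology :=
    K.homologyIsoSc' (d - 1) d (d + 1) (hprevnext d).1 (hprevnext d).2
  let e2 : S.homology ≅ c.pt := hdata.left.homologyIso
  let etot : (extModule R d M Y) ≃ₗ[R] (Module.Dual R (P.X d) ⧸ LinearMap.range f) :=
    (eExt d ≪≫ e1 ≪≫ e2).toLinearEquiv
  let π0 : Module.Dual R (P.X d) →ₗ[R] extModule R d M Y :=
    etot.symm.toLinearMap ∘ₗ (LinearMap.range f).mkQ
  have hπ0_surj : Function.Surjective π0 :=
    etot.symm.surjective.comp (Submodule.mkQ_surjective _)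
  have hπ0_exact : Function.Exact (f : Module.Dual R (P.X (d - 1)) →ₗ[R] _) π0 := by
    intro y
    constructor
    · intro hy
      have hq : (LinearMap.range f).mkQ y = 0 := by
        apply etot.symm.injective
        simpa [π0] using hy
      rw [Submodule.mkQ_apply, Submodule.Quotient.mk_eq_zero] at hq
      exact hq
    · rintro ⟨x, rfl⟩
      have hq : (LinearMap.range f).mkQ (f x) = 0 :=
        (Submodule.Quotient.mk_eq_zero _).2 ⟨x, rfl⟩
      simp [π0, hq]
  refine ⟨part1, part2, ⟨π0, hπ0_surj, hπ0_exact⟩, ?_⟩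
  -- part 4 : the finite projective resolution of Ext^d
  let Q := dualComplex P d
  -- the key exactness fact for the augmentation, valid for every `d`
  have hkey : Function.Exact ((P.d (ridx d 0) (ridx d 1)).hom.dualMap) π0 := by
    rcases Nat.eq_zero_or_pos d with hd0 | hd1
    · subst hd0
      refine exact_pi_congr P (show ridx 0 1 = 1 from rfl) π0 ?_
      have hz1 : P.d 0 1 = 0 := P.shape _ _ (by simp)
      have hz2 : P.d 0 (0 - 1) = 0 := P.shape _ _ (by simp)
      have hd1 : (P.d 0 1).hom.dualMap = 0 := by
        rw [hz1]; refine LinearMap.ext fun φ => LinearMap.ext fun x => ?_; simp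
      have hd2 : (P.d 0 (0 - 1)).hom.dualMap = 0 := by
        rw [hz2]; refine LinearMap.ext fun φ => LinearMap.ext fun x => ?_; simp
      intro y
      constructor
      · intro hy
        obtain ⟨x, hx⟩ := (hπ0_exact y).1 hy
        rw [hf, hd2] at hx
        refine ⟨0, ?_⟩
        rw [hd1]
        simpa using hx
      · rintro ⟨x, hx⟩
        rw [hd1] at hx
        have hy0 : y = 0 := by simpa using hx.symm
        rw [hy0]
        refine (hπ0_exact 0).2 ⟨0, ?_⟩
        rw [hf, hd2]
        simp
    · exact exact_pi_congr P (ridx_le hd1) π0 hπ0_exact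
  have hQd10 : Q.d 1 0 ≫ ModuleCat.ofHom π0 = 0 := by
    rw [show Q.d 1 0 = _ from dualComplex_d P d 0]
    refine ModuleCat.hom_ext (LinearMap.ext fun x => ?_)
    exact (hkey _).2 ⟨x, rfl⟩
  refine ⟨Q, ModuleCat.ofHom π0, ?_, ?_, ?_, ?_, ⟨hQd10, ?_⟩, ?_⟩
  · -- projectivity
    intro i
    show Projective (ModuleCat.of R (Module.Dual R (P.X (ridx d i))))
    exact (IsProjective.iff_projective _).1 inferInstance
  · -- finiteness
    intro i
    show Module.Finite R (Module.Dual R (P.X (ridx d i)))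
    infer_instance
  · -- vanishing above d
    intro i hi
    exact isZero_dual (P.X (ridx d i)) (hbdd _ (ridx_gt hi))
  · -- epi
    exact (ModuleCat.epi_iff_surjective _).2 hπ0_surj
  · -- exactness at 0
    rw [ShortComplex.moduleCat_exact_iff]
    intro x hx
    obtain ⟨y, hy⟩ := (hkey x).1 hx
    refine ⟨y, ?_⟩
    exact hy
  · -- exactness at n+1
    intro n
    rw [HomologicalComplex.exactAt_iff' Q (n+2) (n+1) n (ChainComplex.prev ℕ (n+1))
      (ChainComplex.next_nat_succ n)]
    rw [ShortComplex.moduleCat_exact_iff]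
    intro x hx
    have hg : (Q.sc' (n+2) (n+1) n).g =
        ModuleCat.ofHom ((P.d (ridx d n) (ridx d (n+1))).hom.dualMap) := dualComplex_d P d n
    have hf : (Q.sc' (n+2) (n+1) n).f =
        ModuleCat.ofHom ((P.d (ridx d (n+1)) (ridx d (n+2))).hom.dualMap) := dualComplex_d P d (n+1)
    rw [hg] at hx
    rcases lt_trichotomy (n+1) d with hlt | heq | hgt
    · -- interior: use hKE at m = d - (n+1)
      set m := d - (n+1) with hm
      have e1 : ridx d (n+1) = m := ridx_le (by omega)
      have e2 : ridx d (n+2) = m - 1 := by rw [ridx_le (by omega)]; omega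
      have e3 : ridx d n = m + 1 := by rw [ridx_le (by omega)]; omega
      have hexm := fexact_congr P e1 e2 e3 (hKE m (by omega))
      obtain ⟨y, hy⟩ := (hexm x).1 hx
      refine ⟨y, ?_⟩
      rw [hf]
      exact hy
    · -- top: n+1 = d, use injectivity
      have e1 : ridx d (n+1) = 0 := by rw [ridx_le (by omega)]; omega
      have e2 : ridx d n = 1 := by rw [ridx_le (by omega)]; omega
      have hinj : Function.Injective ((P.d (ridx d n) (ridx d (n+1))).hom.dualMap) :=
        inj_congr P e2 e1 (part1 (by omega))
      have hx' : (P.d (ridx d n) (ridx d (n+1))).hom.dualMap x = 0 := hx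
      have hx0 : x = 0 := by
        apply hinj
        rw [hx']; exact (map_zero _).symm
      refine ⟨0, ?_⟩
      rw [hf, hx0]
      exact map_zero _
    · -- above d : the middle object is zero
      haveI h1 : Subsingleton ((Q.sc' (n+2) (n+1) n).X₂) :=
        subsingleton_of_isZero (isZero_dual (P.X (ridx d (n+1))) (hbdd _ (ridx_gt hgt)))
      haveI h2 : Subsingleton (ModuleCat.of R (Module.Dual R (P.X (ridx d (n+1))))) :=
        subsingleton_of_isZero (isZero_dual (P.X (ridx d (n+1))) (hbdd _ (ridx_gt hgt)))
      refine ⟨0, ?_⟩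
      rw [hf]
      exact Subsingleton.elim _ _
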